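/- For integers 0 < r < d, the function f_{d,r}(x_1,...,x_d) = Σ_{K ⊆ [d], |K| = r} Π_{j∈K} x_j · Π_{j∉K} (1 - x_j), restricted to the domain D_{d,r} = { x ∈ [0,1]^d : Σ_i x_i = r }, attains its minimum at the point (r/d, ..., r/d), and this minimum equals C(d,r) · (r/d)^r · ((d-r)/d)^{d-r}. -/

import Mathlib

open Finset

section Prelude

noncomputable def Fdr (d r : ℕ) (x : Fin d → ℝ) : ℝ :=
  ∑ K ∈ Finset.powersetCard r (Finset.univ : Finset (Fin d)),
    (∏ j ∈ K, x j) * ∏ j ∈ Kᶜ, (1 - x j)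

variable {d r : ℕ}

lemma myMapCompl (e : Equiv.Perm (Fin d)) (K : Finset (Fin d)) :
    (K.map e.toEmbedding)ᶜ = Kᶜ.map e.toEmbedding := by
  ext a
  simp [Finset.mem_map_equiv]

lemma Fdr_perm (x : Fin d → ℝ) (e : Equiv.Perm (Fin d)) : Fdr d r (x ∘ e) = Fdr d r x := by
  rw [Fdr, Fdr]
  refine Finset.sum_nbij' (fun K => K.map e.toEmbedding) (fun K => K.map e.symm.toEmbedding)
    ?_ ?_ ?_ ?_ ?_
  · intro K hK
    simp only [Finset.mem_powersetCard_univ, Finset.card_map] at *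
    exact hK
  · intro K hK
    simp only [Finset.mem_powersetCard_univ, Finset.card_map] at *
    exact hK
  · intro K _
    simp only [Finset.map_map]
    ext a
    simp
  · intro K _
    simp only [Finset.map_map]
    ext a
    simp
  · intro K _
    rw [myMapCompl, Finset.prod_map, Finset.prod_map]
    rfl

lemma Fdr_affine (x : Fin d → ℝ) (i : Fin d) :
    ∃ p q : ℝ, ∀ u : ℝ, Fdr d r (Function.update x i u) = p * u + q := by
  classical
  set P : ℝ := ∑ K ∈ (powersetCard r (univ : Finset (Fin d))).filter (fun K => i ∈ K),
      (∏ j ∈ K \ {i}, x j) * ∏ j ∈ Kᶜ, (1 - x j) with hP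
  set Q : ℝ := ∑ K ∈ (powersetCard r (univ : Finset (Fin d))).filter (fun K => i ∉ K),
      (∏ j ∈ K, x j) * ((1 : ℝ) * ∏ j ∈ Kᶜ \ {i}, (1 - x j)) with hQ
  set Q' : ℝ := ∑ K ∈ (powersetCard r (univ : Finset (Fin d))).filter (fun K => i ∉ K),
      (∏ j ∈ K, x j) * ∏ j ∈ Kᶜ \ {i}, (1 - x j) with hQ'
  refine ⟨P - Q', Q', ?_⟩
  intro u
  rw [Fdr, ← Finset.sum_filter_add_sum_filter_not (powersetCard r univ) (fun K => i ∈ K)]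
  have h1 : ∑ K ∈ (powersetCard r (univ : Finset (Fin d))).filter (fun K => i ∈ K),
      (∏ j ∈ K, Function.update x i u j) * ∏ j ∈ Kᶜ, (1 - Function.update x i u j)
      = u * P := by
    rw [hP, Finset.mul_sum]
    refine Finset.sum_congr rfl (fun K hK => ?_)
    rw [Finset.mem_filter] at hK
    rw [Finset.prod_update_of_mem hK.2]
    have h2 : ∏ j ∈ Kᶜ, (1 - Function.update x i u j) = ∏ j ∈ Kᶜ, (1 - x j) :=
      Finset.prod_congr rfl (fun j hj => by
        rw [Function.update_of_ne (fun hji : j = i => (Finset.mem_compl.mp hj) (by rw [hji]; exact hK.2))])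
    rw [h2]
    ring
  have h3 : ∑ K ∈ (powersetCard r (univ : Finset (Fin d))).filter (fun K => ¬ i ∈ K),
      (∏ j ∈ K, Function.update x i u j) * ∏ j ∈ Kᶜ, (1 - Function.update x i u j)
      = (1 - u) * Q' := by
    rw [hQ', Finset.mul_sum]
    refine Finset.sum_congr rfl (fun K hK => ?_)
    rw [Finset.mem_filter] at hK
    have h4 : ∏ j ∈ K, Function.update x i u j = ∏ j ∈ K, x j :=
      Finset.prod_congr rfl (fun j hj => by
        rw [Function.update_of_ne (fun hji : j = i => hK.2 (by rw [← hji]; exact hj))])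
    have h5 : (fun j => 1 - Function.update x i u j)
        = Function.update (fun j => 1 - x j) i (1 - u) := by
      funext j
      rcases eq_or_ne j i with rfl | hji
      · simp
      · rw [Function.update_of_ne hji, Function.update_of_ne hji]
    have h6 : ∏ j ∈ Kᶜ, (1 - Function.update x i u j)
        = (1 - u) * ∏ j ∈ Kᶜ \ {i}, (1 - x j) := by
      calc ∏ j ∈ Kᶜ, (1 - Function.update x i u j)
          = ∏ j ∈ Kᶜ, Function.update (fun j => 1 - x j) i (1 - u) j := by rw [h5]
        _ = (1 - u) * ∏ j ∈ Kᶜ \ {i}, (1 - x j) :=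
            Finset.prod_update_of_mem (Finset.mem_compl.mpr hK.2) _ _
    rw [h4, h6]
    ring
  rw [h1, h3]
  ring

lemma update2_swap (x : Fin d → ℝ) {i j : Fin d} (hij : i ≠ j) (u v : ℝ) :
    Function.update (Function.update x i u) j v
      = (Function.update (Function.update x i v) j u) ∘ (Equiv.swap i j) := by
  funext k
  simp only [Function.comp_apply]
  rcases eq_or_ne k i with rfl | hki
  · rw [Equiv.swap_apply_left, Function.update_self,
      Function.update_of_ne hij, Function.update_self]
  rcases eq_or_ne k j with rfl | hkj
  · rw [Equiv.swap_apply_right, Function.update_self, Function.update_of_ne hij,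
      Function.update_self]
  · rw [Equiv.swap_apply_of_ne_of_ne hki hkj, Function.update_of_ne hkj,
      Function.update_of_ne hki, Function.update_of_ne hkj, Function.update_of_ne hki]

lemma Fdr_bilinear (x : Fin d → ℝ) {i j : Fin d} (hij : i ≠ j) :
    ∃ A B E : ℝ, ∀ u v : ℝ,
      Fdr d r (Function.update (Function.update x i u) j v)
        = A + B * (u + v) + E * (u * v) := by
  classical
  set G : ℝ → ℝ → ℝ := fun u v => Fdr d r (Function.update (Function.update x i u) j v)
    with hG
  have haffv : ∀ u v : ℝ, G u v = G u 0 + v * (G u 1 - G u 0) := by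
    intro u v
    obtain ⟨p, q, hpq⟩ := Fdr_affine (d := d) (r := r) (Function.update x i u) j
    simp only [hG]
    rw [hpq v, hpq 0, hpq 1]
    ring
  have haffu : ∀ v u : ℝ, G u v = G 0 v + u * (G 1 v - G 0 v) := by
    intro v u
    obtain ⟨p, q, hpq⟩ := Fdr_affine (d := d) (r := r) (Function.update x j v) i
    have comm : ∀ w : ℝ, Function.update (Function.update x i w) j v
        = Function.update (Function.update x j v) i w :=
      fun w => Function.update_comm hij w v x
    simp only [hG, comm]
    rw [hpq u, hpq 0, hpq 1]
    ring
  have hsym : G 1 0 = G 0 1 := by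
    simp only [hG]
    rw [update2_swap x hij 1 0, Fdr_perm]
  refine ⟨G 0 0, G 1 0 - G 0 0, G 1 1 - G 1 0 - G 0 1 + G 0 0, fun u v => ?_⟩
  show G u v = _
  rw [haffv u v, haffu 0 u, haffu 1 u, ← hsym]
  ring

lemma update_comp (φ : ℝ → ℝ) (w : Fin d → ℝ) (a : Fin d) (b : ℝ) :
    (fun k => φ (Function.update w a b k)) = Function.update (fun k => φ (w k)) a (φ b) := by
  funext k
  rcases eq_or_ne k a with rfl | h
  · simp
  · simp [Function.update_of_ne h]

lemma sum_update2 (φ : ℝ → ℝ) (y : Fin d → ℝ) {i j : Fin d} (hij : i ≠ j) (u v : ℝ) :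
    ∑ k, φ (Function.update (Function.update y i u) j v k)
      = ∑ k, φ (y k) - φ (y i) - φ (y j) + φ u + φ v := by
  classical
  have s1 : ∑ k, φ (Function.update (Function.update y i u) j v k)
      = φ v + ∑ k ∈ univ \ {j}, φ (Function.update y i u k) := by
    rw [show (fun k => φ (Function.update (Function.update y i u) j v k))
        = Function.update (fun k => φ (Function.update y i u k)) j (φ v) from
      update_comp φ _ j v]
    exact Finset.sum_update_of_mem (mem_univ j) _ _
  have s2 : ∑ k ∈ univ \ {j}, φ (Function.update y i u k)
      = φ u + ∑ k ∈ (univ \ {j}) \ {i}, φ (y k) := by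
    rw [show (fun k => φ (Function.update y i u k))
        = Function.update (fun k => φ (y k)) i (φ u) from update_comp φ y i u]
    exact Finset.sum_update_of_mem (by simp [hij]) _ _
  have hset : (univ \ {j}) \ {i} = univ \ ({i, j} : Finset (Fin d)) := by
    ext a
    simp [and_comm]
  have s3 : ∑ k ∈ univ \ ({i, j} : Finset (Fin d)), φ (y k)
      = ∑ k, φ (y k) - (φ (y i) + φ (y j)) := by
    have hsub : ({i, j} : Finset (Fin d)) ⊆ univ := subset_univ _
    have := Finset.sum_sdiff (f := fun k => φ (y k)) hsub
    have hpair : ∑ k ∈ ({i, j} : Finset (Fin d)), φ (y k) = φ (y i) + φ (y j) :=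
      Finset.sum_pair hij
    linarith
  rw [s1, s2, hset, s3]
  ring

lemma Fdr_eval_struct (d r : ℕ) (y : Fin d → ℝ) (t : ℝ)
    (A1 A0 Am : Finset (Fin d))
    (h1 : ∀ i ∈ A1, y i = 1) (h0 : ∀ i ∈ A0, y i = 0) (hm : ∀ i ∈ Am, y i = t)
    (hcover : ∀ i, i ∈ A1 ∨ i ∈ A0 ∨ i ∈ Am)
    (d10 : Disjoint A1 A0) (d1m : Disjoint A1 Am) (d0m : Disjoint A0 Am)
    (k : ℕ) (hk : r = A1.card + k) (hk2 : k ≤ Am.card) :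
    Fdr d r y = (Am.card.choose k : ℝ) * t ^ k * (1 - t) ^ (Am.card - k) := by
  classical
  set Pp : Finset (Fin d) → Prop := fun K => A1 ⊆ K ∧ A0 ∩ K = ∅ with hPp
  have step1 : Fdr d r y
      = ∑ K ∈ (powersetCard r (univ : Finset (Fin d))).filter Pp,
          (∏ j ∈ K, y j) * ∏ j ∈ Kᶜ, (1 - y j) := by
    rw [Fdr]
    refine (Finset.sum_filter_of_ne (p := Pp) ?_).symm
    intro K _ hne
    by_contra hP
    simp only [hPp, not_and_or] at hP
    rcases hP with hP | hP
    · obtain ⟨a, ha1, haK⟩ := Finset.not_subset.mp hP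
      have : ∏ j ∈ Kᶜ, (1 - y j) = 0 :=
        Finset.prod_eq_zero (Finset.mem_compl.mpr haK) (by rw [h1 a ha1]; ring)
      exact hne (by rw [this, mul_zero])
    · obtain ⟨a, ha⟩ := Finset.nonempty_iff_ne_empty.mpr hP
      rw [Finset.mem_inter] at ha
      have : ∏ j ∈ K, y j = 0 := Finset.prod_eq_zero ha.2 (h0 a ha.1)
      exact hne (by rw [this, zero_mul])
  have step2 : ∀ K ∈ (powersetCard r (univ : Finset (Fin d))).filter Pp,
      (∏ j ∈ K, y j) * ∏ j ∈ Kᶜ, (1 - y j) = t ^ k * (1 - t) ^ (Am.card - k) := by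
    intro K hK
    rw [Finset.mem_filter, Finset.mem_powersetCard_univ] at hK
    have hKr := hK.1
    have hsub := hK.2.1
    have hdisj := hK.2.2
    have hKeq : K = A1 ∪ (K ∩ Am) := by
      ext a
      simp only [Finset.mem_union, Finset.mem_inter]
      constructor
      · intro haK
        rcases hcover a with h | h | h
        · exact Or.inl h
        · exact absurd (Finset.mem_inter.mpr ⟨h, haK⟩) (by rw [hdisj]; simp)
        · exact Or.inr ⟨haK, h⟩
      · rintro (h | h)
        · exact hsub h
        · exact h.1
    have hdisj1m : Disjoint A1 (K ∩ Am) := d1m.mono_right (Finset.inter_subset_right)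
    have hKMcard : (K ∩ Am).card = k := by
      have := hKr
      rw [hKeq, Finset.card_union_of_disjoint hdisj1m] at this
      omega
    have hprod1 : ∏ j ∈ K, y j = t ^ k := by
      rw [hKeq, Finset.prod_union hdisj1m]
      rw [Finset.prod_eq_one h1, one_mul]
      rw [Finset.prod_congr rfl (fun j hj => hm j (Finset.mem_inter.mp hj).2),
        Finset.prod_const, hKMcard]
    have hcompl : Kᶜ = A0 ∪ (Am \ K) := by
      ext a
      simp only [Finset.mem_compl, Finset.mem_union, Finset.mem_sdiff]
      constructor
      · intro haK
        rcases hcover a with h | h | h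
        · exact absurd (hsub h) haK
        · exact Or.inl h
        · exact Or.inr ⟨h, haK⟩
      · rintro (h | h)
        · intro haK
          have : a ∈ A0 ∩ K := Finset.mem_inter.mpr ⟨h, haK⟩
          rw [hdisj] at this
          simp at this
        · exact h.2
    have hdisj0m : Disjoint A0 (Am \ K) := d0m.mono_right (Finset.sdiff_subset)
    have hAmK : Am \ K = Am \ (K ∩ Am) := by
      ext a
      simp only [Finset.mem_sdiff, Finset.mem_inter]
      tauto
    have hAmKcard : (Am \ K).card = Am.card - k := by
      rw [hAmK, Finset.card_sdiff_of_subset (Finset.inter_subset_right), hKMcard]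
    have hprod2 : ∏ j ∈ Kᶜ, (1 - y j) = (1 - t) ^ (Am.card - k) := by
      rw [hcompl, Finset.prod_union hdisj0m]
      rw [Finset.prod_eq_one (fun j hj => by rw [h0 j hj]; ring), one_mul]
      rw [Finset.prod_congr rfl (fun j hj => by
        rw [hm j (Finset.mem_sdiff.mp hj).1]), Finset.prod_const, hAmKcard]
    rw [hprod1, hprod2]
  have step3 : ((powersetCard r (univ : Finset (Fin d))).filter Pp).card
      = Am.card.choose k := by
    rw [← Finset.card_powersetCard k Am]
    apply Finset.card_nbij' (fun K => K ∩ Am) (fun L => L ∪ A1)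
    · intro K hK
      rw [Finset.mem_coe, Finset.mem_filter, Finset.mem_powersetCard_univ] at hK
      have hKr := hK.1
      have hsub := hK.2.1
      have hdisj := hK.2.2
      rw [Finset.mem_coe, Finset.mem_powersetCard]
      constructor
      · exact Finset.inter_subset_right
      · -- same card computation as above
        have hKeq : K = A1 ∪ (K ∩ Am) := by
          ext a
          simp only [Finset.mem_union, Finset.mem_inter]
          constructor
          · intro haK
            rcases hcover a with h | h | h
            · exact Or.inl h
            · exact absurd (Finset.mem_inter.mpr ⟨h, haK⟩) (by rw [hdisj]; simp)
            · exact Or.inr ⟨haK, h⟩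
          · rintro (h | h)
            · exact hsub h
            · exact h.1
        have hdisj1m : Disjoint A1 (K ∩ Am) := d1m.mono_right (Finset.inter_subset_right)
        have := hKr
        rw [hKeq, Finset.card_union_of_disjoint hdisj1m] at this
        show (K ∩ Am).card = k
        omega
    · intro L hL
      rw [Finset.mem_coe, Finset.mem_powersetCard] at hL
      rw [Finset.mem_coe, Finset.mem_filter, Finset.mem_powersetCard_univ]
      have hdisjL : Disjoint L A1 := (d1m.mono_right hL.1).symm
      refine ⟨?_, Finset.subset_union_right, ?_⟩
      · rw [Finset.card_union_of_disjoint hdisjL, hL.2, hk]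
        omega
      · ext a
        simp only [Finset.mem_inter, Finset.mem_union]
        constructor
        · rintro ⟨ha0, ha | ha⟩
          · exact absurd (Finset.mem_inter.mpr ⟨ha0, ha⟩)
              (by rw [Finset.disjoint_iff_inter_eq_empty.mp (d0m.mono_right hL.1)]; simp)
          · exact absurd (Finset.mem_inter.mpr ⟨ha, ha0⟩)
              (by rw [Finset.disjoint_iff_inter_eq_empty.mp d10]; simp)
        · intro h
          simp at h
    · intro K hK
      rw [Finset.mem_coe, Finset.mem_filter, Finset.mem_powersetCard_univ] at hK
      have hKr := hK.1
      have hsub := hK.2.1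
      have hdisj := hK.2.2
      have hKeq : K = A1 ∪ (K ∩ Am) := by
        ext a
        simp only [Finset.mem_union, Finset.mem_inter]
        constructor
        · intro haK
          rcases hcover a with h | h | h
          · exact Or.inl h
          · exact absurd (Finset.mem_inter.mpr ⟨h, haK⟩) (by rw [hdisj]; simp)
          · exact Or.inr ⟨haK, h⟩
        · rintro (h | h)
          · exact hsub h
          · exact h.1
      show K ∩ Am ∪ A1 = K
      rw [Finset.union_comm]
      exact hKeq.symm
    · intro L hL
      rw [Finset.mem_coe, Finset.mem_powersetCard] at hL
      ext a
      simp only [Finset.mem_inter, Finset.mem_union]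
      constructor
      · rintro ⟨ha | ha, ham⟩
        · exact ha
        · exact absurd (Finset.mem_inter.mpr ⟨ha, ham⟩)
            (by rw [Finset.disjoint_iff_inter_eq_empty.mp d1m]; simp)
      · intro h
        exact ⟨Or.inl h, hL.1 h⟩
  rw [step1, Finset.sum_congr rfl step2, Finset.sum_const, step3, nsmul_eq_mul]
  ring


lemma expstep (m : ℕ) (hm : 0 < m) :
    ((m + 1 : ℝ) / m) ^ m ≤ ((m + 1 + 1 : ℝ) / (m + 1)) ^ (m + 1) := by
  set M : ℝ := (m : ℝ) with hM
  have h1 : (1 : ℝ) ≤ M := by simp only [hM]; exact_mod_cast hm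
  have h0 : (0 : ℝ) < M := by linarith
  have hq : -(2:ℝ) ≤ -(1 / (M + 1) ^ 2) := by
    have h2 : (1:ℝ) ≤ (M + 1) ^ 2 := by nlinarith
    have h3 : 1 / (M + 1) ^ 2 ≤ 1 := by rw [div_le_one (by nlinarith)]; exact h2
    linarith
  have hb := one_add_mul_le_pow hq (m + 1)
  have e1 : 1 + ((m + 1 : ℕ) : ℝ) * -(1 / (M + 1) ^ 2) = M / (M + 1) := by
    push_cast
    field_simp
    ring
  have e2 : (1 + -(1 / (M + 1) ^ 2)) = (M * (M + 2)) / (M + 1) ^ 2 := by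
    field_simp
    ring
  rw [e1, e2] at hb
  have key : ((M + 1) / M) ^ m = ((M + 1) / M) ^ (m + 1) * (M / (M + 1)) := by
    rw [pow_succ]
    field_simp
  rw [key]
  calc ((M + 1) / M) ^ (m + 1) * (M / (M + 1))
      ≤ ((M + 1) / M) ^ (m + 1) * ((M * (M + 2)) / (M + 1) ^ 2) ^ (m + 1) := by
        apply mul_le_mul_of_nonneg_left hb (by positivity)
    _ = (((M + 1) / M) * ((M * (M + 2)) / (M + 1) ^ 2)) ^ (m + 1) := by rw [mul_pow]
    _ = ((M + 1 + 1) / (M + 1)) ^ (m + 1) := by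
        congr 1
        field_simp
        ring

lemma expmono {n m : ℕ} (hn : 0 < n) (hnm : n ≤ m) :
    ((n + 1 : ℝ) / n) ^ n ≤ ((m + 1 : ℝ) / m) ^ m := by
  induction m, hnm using Nat.le_induction with
  | base => exact le_refl _
  | succ m hm ih =>
      refine ih.trans ?_
      have := expstep m (lt_of_lt_of_le hn hm)
      push_cast at this ⊢
      convert this using 3 <;> push_cast <;> ring

lemma choose_ident (k n : ℕ) :
    (n + 1) * (k + n + 1).choose k = (k + n + 1) * (k + n).choose k := by
  have e1 : (k + n).choose k * k.factorial * n.factorial = (k + n).factorial := by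
    have := Nat.choose_mul_factorial_mul_factorial (show k ≤ k + n by omega)
    simpa [show k + n - k = n by omega] using this
  have e2 : (k + n + 1).choose k * k.factorial * (n + 1).factorial = (k + n + 1).factorial := by
    have := Nat.choose_mul_factorial_mul_factorial (show k ≤ k + n + 1 by omega)
    simpa [show k + n + 1 - k = n + 1 by omega] using this
  have hfac : 0 < k.factorial * n.factorial := by positivity
  apply Nat.eq_of_mul_eq_mul_right hfac
  calc (n + 1) * (k + n + 1).choose k * (k.factorial * n.factorial)
      = (k + n + 1).choose k * k.factorial * ((n + 1) * n.factorial) := by ring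
    _ = (k + n + 1).choose k * k.factorial * (n + 1).factorial := by rw [Nat.factorial_succ]
    _ = (k + n + 1).factorial := e2
    _ = (k + n + 1) * (k + n).factorial := Nat.factorial_succ _
    _ = (k + n + 1) * ((k + n).choose k * k.factorial * n.factorial) := by rw [e1]
    _ = (k + n + 1) * (k + n).choose k * (k.factorial * n.factorial) := by ring

noncomputable def Greal (m k : ℕ) : ℝ :=
  (m.choose k : ℝ) * ((k : ℝ) / m) ^ k * (((m - k : ℕ) : ℝ) / m) ^ (m - k)

lemma Greal_mono1 {m k : ℕ} (hk : 0 < k) (hkm : k < m) : Greal (m + 1) k ≤ Greal m k := by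
  obtain ⟨n, rfl⟩ : ∃ n, m = k + n := ⟨m - k, by omega⟩
  have hn : 0 < n := by omega
  set a : ℝ := (k : ℝ) with ha
  set b : ℝ := ((k + n : ℕ) : ℝ) with hb
  have ha0 : (0:ℝ) < a := by rw [ha]; exact_mod_cast hk
  have hn0 : (0:ℝ) < (n:ℝ) := by exact_mod_cast hn
  have hb0 : (0:ℝ) < b := by rw [hb]; push_cast; linarith
  have hb1 : (0:ℝ) < b + 1 := by linarith
  set ck : ℝ := ((k + n).choose k : ℝ) with hck
  set ck1 : ℝ := ((k + n + 1).choose k : ℝ) with hck1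
  have hckpos : (0:ℝ) < ck := by
    rw [hck]; exact_mod_cast Nat.choose_pos (show k ≤ k + n by omega)
  have hchoose : ((n : ℝ) + 1) * ck1 = (b + 1) * ck := by
    rw [hck, hck1, hb]
    push_cast
    exact_mod_cast congrArg (fun z : ℕ => (z : ℝ)) (choose_ident k n)
  have hsub1 : k + n + 1 - k = n + 1 := by omega
  have hsub2 : k + n - k = n := by omega
  rw [Greal, Greal, hsub1, hsub2]
  rw [show ((k + n + 1 : ℕ) : ℝ) = b + 1 by rw [hb]; push_cast; ring]
  rw [div_pow, div_pow, div_pow, div_pow]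
  have hc : ((n + 1 : ℕ) : ℝ) = (n : ℝ) + 1 := by push_cast; ring
  have hL : ck1 * (a ^ k / (b + 1) ^ k) * (((n + 1 : ℕ) : ℝ) ^ (n + 1) / (b + 1) ^ (n + 1))
      = (ck1 * a ^ k * ((n:ℝ) + 1) ^ (n + 1)) / (b + 1) ^ (k + (n + 1)) := by
    rw [hc, pow_add]
    field_simp
    ring
  have hR : ck * (a ^ k / b ^ k) * ((n : ℝ) ^ n / b ^ n)
      = (ck * a ^ k * (n:ℝ) ^ n) / b ^ (k + n) := by
    rw [pow_add]
    field_simp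
  rw [hL, hR, div_le_div_iff₀ (by positivity) (by positivity)]
  -- key inequality from expmono
  have hexp := expmono hn (show n ≤ k + n by omega)
  rw [div_pow, div_pow, div_le_div_iff₀ (by positivity) (by positivity)] at hexp
  have hexp' : ((n:ℝ) + 1) ^ n * b ^ (k + n) ≤ (n:ℝ) ^ n * (b + 1) ^ (k + n) := by
    calc ((n:ℝ) + 1) ^ n * b ^ (k + n) ≤ (n:ℝ) ^ n * (((k+n:ℕ):ℝ) + 1) ^ (k+n) := by
          calc ((n:ℝ) + 1) ^ n * b ^ (k + n)
              = ((n:ℝ) + 1) ^ n * (((k+n:ℕ):ℝ)) ^ (k+n) := by rw [hb]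
            _ ≤ (((k+n:ℕ):ℝ) + 1) ^ (k+n) * (n:ℝ) ^ n := hexp
            _ = (n:ℝ) ^ n * (((k+n:ℕ):ℝ) + 1) ^ (k+n) := by ring
      _ = (n:ℝ) ^ n * (b + 1) ^ (k + n) := by rw [hb]
  calc ck1 * a ^ k * ((n:ℝ) + 1) ^ (n + 1) * b ^ (k + n)
      = (((n:ℝ) + 1) * ck1) * (a ^ k * (((n:ℝ) + 1) ^ n * b ^ (k + n))) := by rw [pow_succ]; ring
    _ = ((b + 1) * ck) * (a ^ k * (((n:ℝ) + 1) ^ n * b ^ (k + n))) := by rw [hchoose]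
    _ ≤ ((b + 1) * ck) * (a ^ k * ((n:ℝ) ^ n * (b + 1) ^ (k + n))) := by
        apply mul_le_mul_of_nonneg_left _ (by positivity)
        apply mul_le_mul_of_nonneg_left hexp' (by positivity)
    _ = ck * a ^ k * (n:ℝ) ^ n * (b + 1) ^ (k + (n + 1)) := by
        rw [show k + (n+1) = (k+n) + 1 by omega, pow_succ]; ring

lemma Greal_symm {m k : ℕ} (hkm : k ≤ m) : Greal m k = Greal m (m - k) := by
  have h1 : m - (m - k) = k := by omega
  rw [Greal, Greal, h1, Nat.choose_symm hkm]
  ring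

lemma Greal_mono2 {m k : ℕ} (hk : 0 < k) (hkm : k < m) : Greal (m + 1) (k + 1) ≤ Greal m k := by
  have h1 : Greal (m + 1) (k + 1) = Greal (m + 1) (m - k) := by
    rw [Greal_symm (show k + 1 ≤ m + 1 by omega), show m + 1 - (k + 1) = m - k by omega]
  rw [h1, Greal_symm hkm.le]
  exact Greal_mono1 (by omega) (by omega)

lemma Greal_chain1 {m k : ℕ} (hk : 0 < k) (hkm : k < m) :
    ∀ j : ℕ, Greal (m + j) k ≤ Greal m k := by
  intro j
  induction j with
  | zero => exact le_refl _
  | succ j ih => exact le_trans (Greal_mono1 (m := m + j) hk (show k < m + j by omega)) ih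

lemma Greal_chain2 {m k : ℕ} (hk : 0 < k) (hkm : k < m) :
    ∀ j : ℕ, Greal (m + j) (k + j) ≤ Greal m k := by
  intro j
  induction j with
  | zero => exact le_refl _
  | succ j ih => exact le_trans (Greal_mono2 (m := m + j) (k := k + j) (by omega) (by omega)) ih

lemma Greal_chain {d r m k : ℕ} (hk : 0 < k) (hkm : k < m) (hkr : k ≤ r)
    (hmk : m - k ≤ d - r) (hrd : r < d) : Greal d r ≤ Greal m k := by
  have s1 : Greal (k + (d - r)) k ≤ Greal m k := by
    have : k + (d - r) = m + ((d - r) - (m - k)) := by omega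
    rw [this]
    exact Greal_chain1 hk hkm _
  have s2 : Greal d r ≤ Greal (k + (d - r)) k := by
    have h2 : Greal (k + (d - r) + (r - k)) (k + (r - k)) ≤ Greal (k + (d - r)) k :=
      Greal_chain2 hk (by omega) _
    have e1 : k + (d - r) + (r - k) = d := by omega
    have e2 : k + (r - k) = r := by omega
    rwa [e1, e2] at h2
  exact s2.trans s1

end Prelude

lemma Fdr_continuous (d r : ℕ) : Continuous (Fdr d r) := by
  apply continuous_finset_sum
  intro K _
  exact (continuous_finset_prod _ fun j _ => continuous_apply j).mul
    (continuous_finset_prod _ fun j _ => continuous_const.sub (continuous_apply j))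

lemma Greal_le_one {d r : ℕ} (hrd : r ≤ d) : Greal d r ≤ 1 := by
  rcases Nat.eq_zero_or_pos d with hd | hd
  · subst hd; interval_cases r; simp [Greal]
  have hd0 : (d : ℝ) ≠ 0 := by positivity
  have key : ((r : ℝ) / d + ((d - r : ℕ) : ℝ) / d) = 1 := by
    have : ((d - r : ℕ) : ℝ) = (d : ℝ) - r := by
      rw [Nat.cast_sub hrd]
    rw [this]; field_simp; ring
  have expand := add_pow ((r : ℝ) / d) (((d - r : ℕ) : ℝ) / d) d
  rw [key] at expand
  simp only [one_pow] at expand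
  rw [Greal]
  calc (d.choose r : ℝ) * ((r : ℝ) / d) ^ r * (((d - r : ℕ) : ℝ) / d) ^ (d - r)
      = ((r : ℝ) / d) ^ r * (((d - r : ℕ) : ℝ) / d) ^ (d - r) * (d.choose r : ℝ) := by ring
    _ ≤ ∑ k ∈ Finset.range (d + 1),
        ((r : ℝ) / d) ^ k * (((d - r : ℕ) : ℝ) / d) ^ (d - k) * (d.choose k : ℝ) := by
        apply Finset.single_le_sum (f := fun k =>
          ((r : ℝ) / d) ^ k * (((d - r : ℕ) : ℝ) / d) ^ (d - k) * (d.choose k : ℝ))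
        · intro k _; positivity
        · simp [Nat.lt_succ_iff, hrd]
    _ = 1 := expand.symm

section Main
variable {d r : ℕ}

lemma struct_lemma (d r : ℕ) (y : Fin d → ℝ)
    (hyIcc : ∀ i, y i ∈ Set.Icc (0:ℝ) 1) (hysum : ∑ i, y i = (r:ℝ))
    (hmin : ∀ x : Fin d → ℝ, (∀ i, x i ∈ Set.Icc (0:ℝ) 1) → (∑ i, x i) = (r:ℝ) →
      Fdr d r y ≤ Fdr d r x)
    (hsq : ∀ x : Fin d → ℝ, (∀ i, x i ∈ Set.Icc (0:ℝ) 1) → (∑ i, x i) = (r:ℝ) →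
      Fdr d r x = Fdr d r y → ∑ i, (y i)^2 ≤ ∑ i, (x i)^2)
    {i j : Fin d} (hij : i ≠ j) (hi0 : y i ≠ 0) (hi1 : y i ≠ 1)
    (hj0 : y j ≠ 0) (hj1 : y j ≠ 1) : y i = y j := by
  have aux : ∀ (i j : Fin d), i ≠ j → y i ≠ 0 → y i ≠ 1 → y j ≠ 0 → y j ≠ 1 →
      y i < y j → False := by
    intro i j hij hi0 hi1 hj0 hj1 hlt
    have hia := hyIcc i
    have hja := hyIcc j
    have ha0 : 0 < y i := lt_of_le_of_ne hia.1 (Ne.symm hi0)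
    have hb1 : y j < 1 := lt_of_le_of_ne hja.2 hj1
    have ha1 : y i < 1 := lt_of_lt_of_le hlt hja.2
    have hb0 : 0 < y j := lt_trans ha0 hlt
    obtain ⟨A, B, E, hABE⟩ := Fdr_bilinear (d := d) (r := r) y hij
    have hFy : Fdr d r y = A + B * (y i + y j) + E * (y i * y j) := by
      have e1 : Function.update y i (y i) = y := Function.update_eq_self i y
      have e2 : Function.update y j (y j) = y := Function.update_eq_self j y
      calc Fdr d r y
          = Fdr d r (Function.update (Function.update y i (y i)) j (y j)) := by rw [e1, e2]
        _ = A + B * (y i + y j) + E * (y i * y j) := hABE _ _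
    have hmem : ∀ u v : ℝ, 0 ≤ u → u ≤ 1 → 0 ≤ v → v ≤ 1 → u + v = y i + y j →
        (∀ kk, Function.update (Function.update y i u) j v kk ∈ Set.Icc (0:ℝ) 1) ∧
        (∑ kk, Function.update (Function.update y i u) j v kk) = (r:ℝ) := by
      intro u v hu0 hu1 hv0 hv1 huv
      constructor
      · intro kk
        rcases eq_or_ne kk j with rfl | hkj
        · rw [Function.update_self]; exact ⟨hv0, hv1⟩
        rcases eq_or_ne kk i with rfl | hki
        · rw [Function.update_of_ne hkj, Function.update_self]; exact ⟨hu0, hu1⟩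
        · rw [Function.update_of_ne hkj, Function.update_of_ne hki]; exact hyIcc kk
      · have hs := sum_update2 (fun w => w) y hij u v
        rw [hs]
        linarith
    -- E ≥ 0 from the midpoint move
    have h1 := hmem ((y i + y j)/2) ((y i + y j)/2)
      (by linarith) (by linarith) (by linarith) (by linarith) (by ring)
    have hge1 := hmin _ h1.1 h1.2
    rw [hABE ((y i + y j)/2) ((y i + y j)/2), hFy] at hge1
    have hEpos : 0 ≤ E := by
      have hkey : 0 ≤ E * ((y i - y j)^2) := by nlinarith [hge1]
      have hpos : 0 < (y i - y j)^2 := by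
        have hne : y i - y j ≠ 0 := sub_ne_zero.mpr (ne_of_lt hlt)
        positivity
      exact le_of_not_gt fun hE => absurd hkey (not_le.mpr (mul_neg_of_neg_of_pos hE hpos))
    -- E ≤ 0 from the outward move
    have hee : 0 < min (y i) (1 - y j) := lt_min ha0 (by linarith)
    have hee1 : min (y i) (1 - y j) ≤ y i := min_le_left _ _
    have hee2 : min (y i) (1 - y j) ≤ 1 - y j := min_le_right _ _
    have h2 := hmem (y i - min (y i) (1 - y j)) (y j + min (y i) (1 - y j))
      (by linarith) (by linarith) (by linarith) (by linarith) (by ring)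
    have hge2 := hmin _ h2.1 h2.2
    rw [hABE (y i - min (y i) (1 - y j)) (y j + min (y i) (1 - y j)), hFy] at hge2
    have hEneg : E ≤ 0 := by
      have hkey2 : 0 ≤ E * (min (y i) (1 - y j)) * (y i - y j - min (y i) (1 - y j)) := by
        nlinarith [hge2]
      have hneg : y i - y j - min (y i) (1 - y j) < 0 := by linarith
      exact le_of_not_gt fun hE =>
        absurd hkey2 (not_le.mpr (mul_neg_of_pos_of_neg (mul_pos hE hee) hneg))
    have hE0 : E = 0 := le_antisymm hEneg hEpos
    -- the midpoint is also a minimizer, contradiction with sum of squares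
    have heq : Fdr d r (Function.update (Function.update y i ((y i + y j)/2)) j ((y i + y j)/2))
        = Fdr d r y := by
      rw [hABE, hFy, hE0]
      ring
    have h3 := hsq _ h1.1 h1.2 heq
    have h4 := sum_update2 (fun w => w^2) y hij ((y i + y j)/2) ((y i + y j)/2)
    rw [h4] at h3
    nlinarith [sq_nonneg (y i - y j)]
  rcases lt_trichotomy (y i) (y j) with h | h | h
  · exact (aux i j hij hi0 hi1 hj0 hj1 h).elim
  · exact h
  · exact (aux j i hij.symm hj0 hj1 hi0 hi1 h).elim

/-- For `0 < r < d`, the function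
`f(x) = ∑_{|K| = r} ∏_{j ∈ K} x_j ∏_{j ∉ K} (1 - x_j)` on
`D = {x ∈ [0,1]^d : ∑ x_i = r}` attains its minimum at the constant vector
`(r/d, …, r/d)`, and this minimum equals `C(d,r) (r/d)^r ((d-r)/d)^(d-r)`. -/
theorem stmt_8 (d r : ℕ) (h0 : 0 < r) (hd : r < d) :
    (∀ x : Fin d → ℝ, (∀ i, x i ∈ Set.Icc (0 : ℝ) 1) → (∑ i, x i) = (r : ℝ) →
      (d.choose r : ℝ) * ((r : ℝ) / d) ^ r * (((d - r : ℕ) : ℝ) / d) ^ (d - r) ≤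
        ∑ K ∈ Finset.powersetCard r (Finset.univ : Finset (Fin d)),
          (∏ j ∈ K, x j) * ∏ j ∈ Kᶜ, (1 - x j)) ∧
    (∑ K ∈ Finset.powersetCard r (Finset.univ : Finset (Fin d)),
        (∏ _j ∈ K, ((r : ℝ) / d)) * ∏ _j ∈ Kᶜ, (1 - (r : ℝ) / d))
      = (d.choose r : ℝ) * ((r : ℝ) / d) ^ r * (((d - r : ℕ) : ℝ) / d) ^ (d - r) := by
  have hd0 : (0:ℝ) < d := by exact_mod_cast lt_trans h0 hd
  have hcast : (1 - (r:ℝ)/d) = ((d - r : ℕ):ℝ)/d := by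
    rw [Nat.cast_sub hd.le]
    field_simp
  constructor
  · -- main inequality
    intro x hxIcc hxsum
    show Greal d r ≤ Fdr d r x
    -- compactness setup
    set D : Set (Fin d → ℝ) :=
      {z | (∀ i, z i ∈ Set.Icc (0:ℝ) 1) ∧ (∑ i, z i) = (r:ℝ)} with hD
    have hDeq : D = Set.Icc (0 : Fin d → ℝ) 1 ∩ {z | (∑ i, z i) = (r:ℝ)} := by
      ext z
      constructor
      · rintro ⟨hz1, hz2⟩
        exact ⟨⟨fun i => (hz1 i).1, fun i => (hz1 i).2⟩, hz2⟩
      · rintro ⟨⟨hz1, hz2⟩, hz3⟩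
        exact ⟨fun i => ⟨hz1 i, hz2 i⟩, hz3⟩
    have hsumcont : Continuous (fun z : Fin d → ℝ => ∑ i, z i) :=
      continuous_finset_sum _ fun i _ => continuous_apply i
    have hDcomp : IsCompact D := by
      rw [hDeq]
      exact isCompact_Icc.inter_right (isClosed_eq hsumcont continuous_const)
    have hDne : D.Nonempty := by
      refine ⟨fun _ => (r:ℝ)/d, fun i => ⟨by positivity, ?_⟩, ?_⟩
      · rw [div_le_one hd0]
        exact_mod_cast hd.le
      · rw [Finset.sum_const, Finset.card_univ, Fintype.card_fin, nsmul_eq_mul]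
        field_simp
    obtain ⟨y0, hy0D, hy0min⟩ :=
      hDcomp.exists_isMinOn hDne (Fdr_continuous d r).continuousOn
    set M : Set (Fin d → ℝ) := D ∩ {z | Fdr d r z = Fdr d r y0} with hM
    have hMcomp : IsCompact M :=
      hDcomp.inter_right (isClosed_eq (Fdr_continuous d r) continuous_const)
    have hMne : M.Nonempty := ⟨y0, hy0D, rfl⟩
    have hsqcont : Continuous (fun z : Fin d → ℝ => ∑ i, (z i)^2) :=
      continuous_finset_sum _ fun i _ => (continuous_apply i).pow 2
    obtain ⟨y, hyM, hymin⟩ := hMcomp.exists_isMinOn hMne hsqcont.continuousOn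
    obtain ⟨hyD, hyF⟩ := hyM
    suffices key : Greal d r ≤ Fdr d r y by
      calc Greal d r ≤ Fdr d r y := key
        _ = Fdr d r y0 := hyF
        _ ≤ Fdr d r x := hy0min ⟨hxIcc, hxsum⟩
    -- structure of y
    have hyIcc := hyD.1
    have hysum := hyD.2
    have hyF' : Fdr d r y = Fdr d r y0 := hyF
    have hmin' : ∀ z : Fin d → ℝ, (∀ i, z i ∈ Set.Icc (0:ℝ) 1) → (∑ i, z i) = (r:ℝ) →
        Fdr d r y ≤ Fdr d r z := by
      intro z hz1 hz2
      rw [hyF']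
      exact hy0min ⟨hz1, hz2⟩
    have hsq' : ∀ z : Fin d → ℝ, (∀ i, z i ∈ Set.Icc (0:ℝ) 1) → (∑ i, z i) = (r:ℝ) →
        Fdr d r z = Fdr d r y → ∑ i, (y i)^2 ≤ ∑ i, (z i)^2 := by
      intro z hz1 hz2 hz3
      exact hymin ⟨⟨hz1, hz2⟩, show Fdr d r z = Fdr d r y0 by rw [hz3, hyF']⟩
    classical
    set A1 : Finset (Fin d) := univ.filter (fun i => y i = 1) with hA1
    set A0 : Finset (Fin d) := univ.filter (fun i => y i = 0) with hA0
    set Am : Finset (Fin d) := univ.filter (fun i => y i ≠ 0 ∧ y i ≠ 1) with hAm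
    have hmem1 : ∀ i ∈ A1, y i = 1 := fun i hi => (Finset.mem_filter.mp hi).2
    have hmem0 : ∀ i ∈ A0, y i = 0 := fun i hi => (Finset.mem_filter.mp hi).2
    have hcover : ∀ i, i ∈ A1 ∨ i ∈ A0 ∨ i ∈ Am := by
      intro i
      simp only [hA1, hA0, hAm, Finset.mem_filter, Finset.mem_univ, true_and]
      tauto
    have d10 : Disjoint A1 A0 := by
      rw [Finset.disjoint_left]
      intro a ha hb
      rw [Finset.mem_filter] at ha hb
      rw [ha.2] at hb
      norm_num at hb
    have d1m : Disjoint A1 Am := by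
      rw [Finset.disjoint_left]
      intro a ha hb
      rw [Finset.mem_filter] at ha hb
      exact hb.2.2 ha.2
    have d0m : Disjoint A0 Am := by
      rw [Finset.disjoint_left]
      intro a ha hb
      rw [Finset.mem_filter] at ha hb
      exact hb.2.1 ha.2
    have hunion : (univ : Finset (Fin d)) = A1 ∪ (A0 ∪ Am) := by
      ext a
      simp only [Finset.mem_univ, Finset.mem_union, true_iff]
      exact hcover a
    have hsplit : (A1.card : ℝ) + ∑ i ∈ Am, y i = (r:ℝ) := by
      have := hysum
      rw [show (Finset.univ : Finset (Fin d)) = A1 ∪ (A0 ∪ Am) from hunion] at this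
      rw [Finset.sum_union (by
          rw [Finset.disjoint_union_right]; exact ⟨d10, d1m⟩),
        Finset.sum_union d0m] at this
      rw [Finset.sum_congr rfl hmem1, Finset.sum_const, nsmul_eq_mul, mul_one] at this
      rw [Finset.sum_congr rfl hmem0, Finset.sum_const, nsmul_eq_mul, mul_zero] at this
      linarith
    rcases Finset.eq_empty_or_nonempty Am with hAmE | hAmNe
    · -- all coordinates are 0/1 : Fdr y = 1
      have hA1r : A1.card = r := by
        rw [hAmE, Finset.sum_empty, add_zero] at hsplit
        exact_mod_cast hsplit
      have heval := Fdr_eval_struct d r y (1/2) A1 A0 Am hmem1 hmem0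
        (by intro i hi; rw [hAmE] at hi; simp at hi) hcover d10 d1m d0m 0
        (by omega) (by omega)
      rw [hAmE] at heval
      simp at heval
      rw [heval]
      exact Greal_le_one hd.le
    · obtain ⟨i0, hi0Am⟩ := hAmNe
      have hi0f := Finset.mem_filter.mp hi0Am
      have hmemt : ∀ i ∈ Am, y i = y i0 := by
        intro i hi
        rcases eq_or_ne i i0 with rfl | hne
        · rfl
        · have hif := Finset.mem_filter.mp hi
          exact struct_lemma d r y hyIcc hysum hmin' hsq' hne
            hif.2.1 hif.2.2 hi0f.2.1 hi0f.2.2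
      have ht0 : 0 < y i0 := lt_of_le_of_ne (hyIcc i0).1 (Ne.symm hi0f.2.1)
      have ht1 : y i0 < 1 := lt_of_le_of_ne (hyIcc i0).2 hi0f.2.2
      have hmpos : 0 < Am.card := Finset.card_pos.mpr ⟨i0, hi0Am⟩
      have hsumAm : ∑ i ∈ Am, y i = (Am.card : ℝ) * y i0 := by
        rw [Finset.sum_congr rfl hmemt, Finset.sum_const, nsmul_eq_mul]
      rw [hsumAm] at hsplit
      have hmr : (0:ℝ) < (Am.card : ℝ) := by exact_mod_cast hmpos
      have har : A1.card < r := by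
        have : (A1.card : ℝ) < (r:ℝ) := by nlinarith
        exact_mod_cast this
      set k : ℕ := r - A1.card with hkdef
      have hkr : r = A1.card + k := by omega
      have hkcast : (k : ℝ) = (Am.card : ℝ) * y i0 := by
        have : (k : ℝ) = (r:ℝ) - (A1.card : ℝ) := by
          rw [hkdef]
          push_cast [Nat.cast_sub har.le]
          ring
        linarith
      have hklt : k < Am.card := by
        have : (k:ℝ) < (Am.card : ℝ) := by nlinarith
        exact_mod_cast this
      have hkpos : 0 < k := by
        have : (0:ℝ) < (k:ℝ) := by nlinarith
        exact_mod_cast this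
      have hteq : y i0 = (k : ℝ) / (Am.card : ℝ) := by
        rw [eq_div_iff hmr.ne']
        linarith
      have heval := Fdr_eval_struct d r y (y i0) A1 A0 Am hmem1 hmem0 hmemt hcover
        d10 d1m d0m k hkr hklt.le
      have hGeq : Fdr d r y = Greal Am.card k := by
        rw [heval, Greal, hteq]
        congr 2
        rw [Nat.cast_sub hklt.le]
        rw [sub_div, div_self hmr.ne']
      rw [hGeq]
      have hsumcard : A1.card + Am.card ≤ d := by
        have h1 : (A1 ∪ Am).card ≤ d := by
          simpa using Finset.card_le_univ (A1 ∪ Am)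
        rwa [Finset.card_union_of_disjoint d1m] at h1
      exact Greal_chain hkpos hklt (by omega) (by omega) hd
  · -- value at the constant vector
    have hc : ∀ K ∈ powersetCard r (univ : Finset (Fin d)),
        (∏ _j ∈ K, ((r:ℝ)/d)) * ∏ _j ∈ Kᶜ, (1 - (r:ℝ)/d)
          = ((r:ℝ)/d)^r * (1 - (r:ℝ)/d)^(d - r) := by
      intro K hK
      rw [Finset.mem_powersetCard_univ] at hK
      rw [Finset.prod_const, Finset.prod_const, hK, Finset.card_compl, Fintype.card_fin, hK]
    rw [Finset.sum_congr rfl hc, Finset.sum_const, Finset.card_powersetCard,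
      Finset.card_univ, Fintype.card_fin, nsmul_eq_mul, hcast]
    ring
end Main
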